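/- Let δ > 0 and let (x_j)_{j∈ℤ} be real numbers. For each x ∈ ℝ let u_x : ℝ → [0, ∞) be a measurable function with ∫_ℝ u_x(t) dt = 1 and u_x vanishing outside [x − δ, x + δ]. Assume there exist constants 0 < A ≤ B < ∞ such that for EVERY sequence (t_j)_{j∈ℤ} with t_j ∈ [x_j − δ, x_j + δ] for all j, the family (t ↦ e^{i t_j t})_{j∈ℤ} is a frame for L²([−π, π]) with bounds A, B. Define Ψ(x) ∈ L²([−π, π]) by Ψ(x)(t) := (2π)^{−1/2} ∫_ℝ u_x(s) e^{i s t} ds. Then (Ψ(x_j))_{j∈ℤ} is a frame for L²([−π, π]): there exist constants 0 < A′ ≤ B′ < ∞ (one may take A′ = A/(2π) and B′ = B/(2π)) such that A′‖u‖ ≤ (∑_{j∈ℤ} |⟨u, Ψ(x_j)⟩|²)^{1/2} ≤ B′‖u‖ for all u ∈ L²([−π, π]). -/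

import Mathlib

open MeasureTheory

/-- Lebesgue measure restricted to `[-π, π]`. -/
noncomputable def muPi : Measure ℝ := volume.restrict (Set.Icc (-Real.pi) Real.pi)

/-- The pairing `⟨f, g⟩ = ∫_{-π}^{π} f(t) conj(g(t)) dt` of `f ∈ L²([-π, π])` with a
function `g : ℝ → ℂ` (the inner product of `f` with `g` in `L²([-π, π])`). -/
noncomputable def coefWith (g : ℝ → ℂ) (f : Lp ℂ 2 muPi) : ℂ :=
  ∫ t, f t * (starRingEnd ℂ) (g t) ∂muPi

/-- A family of functions `g j : ℝ → ℂ` is a frame for `L²([-π, π])` with bounds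
`A, B` if for every `f ∈ L²([-π, π])` the sum `∑ j, ‖⟨f, g j⟩‖²` converges to some `S` with
`A ‖f‖ ≤ √S ≤ B ‖f‖`. -/
def IsFrameCoef {J : Type*} (g : J → ℝ → ℂ) (A B : ℝ) : Prop :=
  ∀ f : Lp ℂ 2 muPi, ∃ S : ℝ, HasSum (fun j => ‖coefWith (g j) f‖ ^ 2) S ∧
    A * ‖f‖ ≤ Real.sqrt S ∧ Real.sqrt S ≤ B * ‖f‖

/-! ### Auxiliary material -/

instance : IsFiniteMeasure muPi := by unfold muPi; infer_instance

lemma mp_neg : MeasurePreserving (fun s : ℝ => -s) muPi muPi := by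
  have h : Measurable (fun s : ℝ => -s) := measurable_neg
  refine ⟨h, ?_⟩
  have e : ((fun s : ℝ => -s) ⁻¹' Set.Icc (-Real.pi) Real.pi) = Set.Icc (-Real.pi) Real.pi := by
    ext t; simp [neg_le, le_neg, and_comm]
  calc Measure.map (fun s : ℝ => -s) muPi
      = Measure.map (fun s : ℝ => -s)
          (volume.restrict ((fun s : ℝ => -s) ⁻¹' Set.Icc (-Real.pi) Real.pi)) := by
        rw [muPi, e]
    _ = (Measure.map (fun s : ℝ => -s) volume).restrict (Set.Icc (-Real.pi) Real.pi) :=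
        (Measure.restrict_map h measurableSet_Icc).symm
    _ = muPi := by
        rw [show (fun s : ℝ => -s) = Neg.neg from rfl,
          (Measure.measurePreserving_neg (volume : Measure ℝ)).map_eq]; rfl

lemma neg_emb : MeasurableEmbedding (fun s : ℝ => -s) :=
  (Homeomorph.neg ℝ).measurableEmbedding

lemma f_int (f : Lp ℂ 2 muPi) : Integrable (fun s => f s) muPi :=
  (Lp.memLp f).integrable (by norm_num)

lemma norm_exp_I_mul (r s : ℝ) : ‖Complex.exp (-(Complex.I * r * s))‖ = 1 := by
  rw [Complex.norm_exp]
  simp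

lemma exp_meas (r : ℝ) : Continuous (fun s : ℝ => Complex.exp (-(Complex.I * r * s))) := by
  continuity

/-- The coefficient functional against the exponential `e^{irs}`. -/
noncomputable def Gc (f : Lp ℂ 2 muPi) (r : ℝ) : ℂ :=
  ∫ s, f s * Complex.exp (-(Complex.I * r * s)) ∂muPi

lemma Gc_int (f : Lp ℂ 2 muPi) (r : ℝ) :
    Integrable (fun s => (f : ℝ → ℂ) s * Complex.exp (-(Complex.I * r * s))) muPi := by
  refine Integrable.bdd_mul (c := 1) (f := fun s : ℝ => Complex.exp (-(Complex.I * r * s)))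
    (g := fun s => (f : ℝ → ℂ) s) (f_int f) ((exp_meas r).aestronglyMeasurable) ?_ |>.congr ?_
  · filter_upwards with s; rw [norm_exp_I_mul]
  · filter_upwards with s; ring

lemma coefWith_exp (f : Lp ℂ 2 muPi) (r : ℝ) :
    coefWith (fun s => Complex.exp (Complex.I * (r : ℂ) * (s : ℂ))) f = Gc f r := by
  unfold coefWith Gc
  congr 1; ext s
  rw [← Complex.exp_conj]
  congr 2
  simp

lemma Gc_continuous (f : Lp ℂ 2 muPi) : Continuous (Gc f) := by
  refine continuous_of_dominated
    (F := fun (r : ℝ) (s : ℝ) => (f : ℝ → ℂ) s * Complex.exp (-(Complex.I * r * s)))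
    (bound := fun s => ‖(f : ℝ → ℂ) s‖) (fun r => (Gc_int f r).1) (fun r => ?_) ?_ ?_
  · filter_upwards with s
    rw [norm_mul, norm_exp_I_mul, mul_one]
  · exact (f_int f).norm
  · filter_upwards with s
    exact Continuous.mul continuous_const (by continuity)

lemma Gc_norm_le (f : Lp ℂ 2 muPi) (r : ℝ) : ‖Gc f r‖ ≤ ∫ s, ‖(f : ℝ → ℂ) s‖ ∂muPi := by
  refine (norm_integral_le_integral_norm _).trans (le_of_eq ?_)
  refine integral_congr_ae (Filter.Eventually.of_forall fun s => ?_)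
  show ‖(f : ℝ → ℂ) s * Complex.exp (-(Complex.I * r * s))‖ = _
  rw [norm_mul, norm_exp_I_mul, mul_one]

/-- The conjugate-reflection of an `L²` function. -/
lemma memJ (f : Lp ℂ 2 muPi) :
    MemLp (fun s => (starRingEnd ℂ) ((f : ℝ → ℂ) (-s))) 2 muPi := by
  have h1 : MemLp (fun s => (f : ℝ → ℂ) (-s)) 2 muPi :=
    (Lp.memLp f).comp_measurePreserving mp_neg
  refine h1.of_le_mul (c := 1)
    (Complex.continuous_conj.comp_aestronglyMeasurable h1.1) ?_
  filter_upwards with s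
  simp

noncomputable def Jf (f : Lp ℂ 2 muPi) : Lp ℂ 2 muPi := (memJ f).toLp _

lemma Jf_coe (f : Lp ℂ 2 muPi) :
    (Jf f : ℝ → ℂ) =ᵐ[muPi] fun s => (starRingEnd ℂ) ((f : ℝ → ℂ) (-s)) :=
  (memJ f).coeFn_toLp

lemma Jf_norm (f : Lp ℂ 2 muPi) : ‖Jf f‖ = ‖f‖ := by
  rw [Jf, Lp.norm_toLp _ (memJ f)]
  have : eLpNorm (fun s => (starRingEnd ℂ) ((f : ℝ → ℂ) (-s))) 2 muPi
      = eLpNorm (f : ℝ → ℂ) 2 muPi := by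
    have e1 : eLpNorm (fun s => (starRingEnd ℂ) ((f : ℝ → ℂ) (-s))) 2 muPi
        = eLpNorm (fun s => (f : ℝ → ℂ) (-s)) 2 muPi := by
      refine eLpNorm_congr_norm_ae ?_
      filter_upwards with s; simp
    rw [e1]
    exact eLpNorm_comp_measurePreserving (Lp.aestronglyMeasurable f) mp_neg
  rw [this, Lp.norm_def]

lemma Gc_J (f : Lp ℂ 2 muPi) (r : ℝ) : Gc (Jf f) r = (starRingEnd ℂ) (Gc f r) := by
  unfold Gc
  have e1 : ∫ s, (Jf f : ℝ → ℂ) s * Complex.exp (-(Complex.I * r * s)) ∂muPi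
      = ∫ s, (starRingEnd ℂ) ((f : ℝ → ℂ) (-s)) * Complex.exp (-(Complex.I * r * s)) ∂muPi := by
    refine integral_congr_ae ?_
    filter_upwards [Jf_coe f] with s hs
    rw [hs]
  rw [e1]
  have e2 : ∫ s, (starRingEnd ℂ) ((f : ℝ → ℂ) (-s)) * Complex.exp (-(Complex.I * r * s)) ∂muPi
      = ∫ s, (starRingEnd ℂ) ((f : ℝ → ℂ) s) * Complex.exp (Complex.I * r * s) ∂muPi := by
    have := mp_neg.integral_comp neg_emb
      (fun s => (starRingEnd ℂ) ((f : ℝ → ℂ) s) * Complex.exp (Complex.I * r * s))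
    rw [← this]
    congr 1; ext s
    push_cast
    ring_nf
  rw [e2, ← integral_conj]
  congr 1; ext s
  rw [map_mul, ← Complex.exp_conj]
  congr 2
  simp

/-- Real part of `f` (in the feature-space sense). -/
noncomputable def gp (f : Lp ℂ 2 muPi) : Lp ℂ 2 muPi := (2:ℂ)⁻¹ • (f + Jf f)
/-- Imaginary part of `f` (in the feature-space sense). -/
noncomputable def hp (f : Lp ℂ 2 muPi) : Lp ℂ 2 muPi := (2*Complex.I:ℂ)⁻¹ • (f - Jf f)

lemma gp_coe (f : Lp ℂ 2 muPi) :
    (gp f : ℝ → ℂ) =ᵐ[muPi] fun s => (2:ℂ)⁻¹ * ((f : ℝ → ℂ) s + (Jf f : ℝ → ℂ) s) := by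
  filter_upwards [Lp.coeFn_smul ((2:ℂ)⁻¹) (f + Jf f), Lp.coeFn_add f (Jf f)] with s h1 h2
  rw [gp] at *
  rw [h1, Pi.smul_apply, h2, Pi.add_apply, smul_eq_mul]

lemma hp_coe (f : Lp ℂ 2 muPi) :
    (hp f : ℝ → ℂ) =ᵐ[muPi] fun s => (2*Complex.I:ℂ)⁻¹ * ((f : ℝ → ℂ) s - (Jf f : ℝ → ℂ) s) := by
  filter_upwards [Lp.coeFn_smul ((2*Complex.I:ℂ)⁻¹) (f - Jf f), Lp.coeFn_sub f (Jf f)] with s h1 h2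
  rw [hp] at *
  rw [h1, Pi.smul_apply, h2, Pi.sub_apply, smul_eq_mul]

lemma Gc_gp (f : Lp ℂ 2 muPi) (r : ℝ) : Gc (gp f) r = ((Gc f r).re : ℂ) := by
  have e1 : Gc (gp f) r = ∫ s, (2:ℂ)⁻¹ * (((f : ℝ → ℂ) s * Complex.exp (-(Complex.I * r * s)))
      + ((Jf f : ℝ → ℂ) s * Complex.exp (-(Complex.I * r * s)))) ∂muPi := by
    unfold Gc
    refine integral_congr_ae ?_
    filter_upwards [gp_coe f] with s hs
    rw [hs]; ring
  rw [e1, integral_const_mul, integral_add (Gc_int f r) (Gc_int (Jf f) r)]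
  show (2:ℂ)⁻¹ * (Gc f r + Gc (Jf f) r) = _
  rw [Gc_J, Complex.add_conj]
  push_cast
  ring

lemma Gc_hp (f : Lp ℂ 2 muPi) (r : ℝ) : Gc (hp f) r = ((Gc f r).im : ℂ) := by
  have e1 : Gc (hp f) r = ∫ s, (2*Complex.I:ℂ)⁻¹ *
      (((f : ℝ → ℂ) s * Complex.exp (-(Complex.I * r * s)))
      - ((Jf f : ℝ → ℂ) s * Complex.exp (-(Complex.I * r * s)))) ∂muPi := by
    unfold Gc
    refine integral_congr_ae ?_
    filter_upwards [hp_coe f] with s hs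
    rw [hs]; ring
  rw [e1, integral_const_mul, integral_sub (Gc_int f r) (Gc_int (Jf f) r)]
  show (2*Complex.I:ℂ)⁻¹ * (Gc f r - Gc (Jf f) r) = _
  rw [Gc_J, Complex.sub_conj]
  have hI : Complex.I ≠ 0 := Complex.I_ne_zero
  field_simp
  push_cast
  ring

lemma norm_split (f : Lp ℂ 2 muPi) : ‖gp f‖^2 + ‖hp f‖^2 = ‖f‖^2 := by
  have h2 : ‖(2:ℂ)⁻¹‖ = 2⁻¹ := by
    rw [norm_inv]; norm_num
  have h2I : ‖(2*Complex.I:ℂ)⁻¹‖ = 2⁻¹ := by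
    rw [norm_inv, norm_mul, Complex.norm_I]; norm_num
  rw [gp, hp, norm_smul, norm_smul, h2, h2I]
  have hpar := parallelogram_law_with_norm ℂ f (Jf f)
  have := Jf_norm f
  rw [this] at hpar
  ring_nf
  ring_nf at hpar
  nlinarith [hpar]

/-- Mean value theorem for averages against a probability density supported in `[a, b]`. -/
lemma mvt_avg (w : ℝ → ℝ) (hw0 : ∀ t, 0 ≤ w t) (hwm : Measurable w)
    (hwint : (∫ t, w t) = 1) (a b : ℝ) (hab : a ≤ b)
    (hsupp : ∀ t, w t ≠ 0 → t ∈ Set.Icc a b)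
    (φ : ℝ → ℝ) (hφ : Continuous φ) :
    ∃ r ∈ Set.Icc a b, (∫ t, w t * φ t) = φ r := by
  have hwI : Integrable w := by
    by_contra hc
    rw [integral_undef hc] at hwint
    norm_num at hwint
  have hne : (Set.Icc a b).Nonempty := Set.nonempty_Icc.mpr hab
  obtain ⟨p, hp, hmin⟩ := isCompact_Icc.exists_isMinOn hne hφ.continuousOn
  obtain ⟨q, hq, hmax⟩ := isCompact_Icc.exists_isMaxOn hne hφ.continuousOn
  set C : ℝ := max |φ p| |φ q| with hC
  have hbound : ∀ t, |w t * φ t| ≤ C * w t := by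
    intro t
    rcases eq_or_ne (w t) 0 with h | h
    · simp [h]
    · have ht := hsupp t h
      have h1 : φ p ≤ φ t := hmin ht
      have h2 : φ t ≤ φ q := hmax ht
      have : |φ t| ≤ C := by
        rcases abs_cases (φ t) with ⟨e, _⟩ | ⟨e, _⟩ <;> rw [e]
        · exact le_trans h2 (le_trans (le_abs_self _) (le_max_right _ _))
        · exact le_trans (neg_le_neg h1) (le_trans (neg_le_abs _) (le_max_left _ _))
      rw [abs_mul, abs_of_nonneg (hw0 t), mul_comm]
      exact mul_le_mul_of_nonneg_right this (hw0 t)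
  have hint : Integrable (fun t => w t * φ t) := by
    refine Integrable.mono' (hwI.const_mul C) ?_ ?_
    · exact (hwm.mul (hφ.measurable)).aestronglyMeasurable
    · filter_upwards with t
      rw [Real.norm_eq_abs]
      exact hbound t
  have hle1 : (∫ t, w t * φ t) ≤ φ q := by
    have : (∫ t, w t * φ t) ≤ ∫ t, w t * φ q := by
      refine integral_mono hint (hwI.mul_const _) (fun t => ?_)
      rcases eq_or_ne (w t) 0 with h | h
      · simp [h]
      · exact mul_le_mul_of_nonneg_left (hmax (hsupp t h)) (hw0 t)
    rwa [integral_mul_const, hwint, one_mul] at this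
  have hle2 : φ p ≤ ∫ t, w t * φ t := by
    have : (∫ t, w t * φ p) ≤ ∫ t, w t * φ t := by
      refine integral_mono (hwI.mul_const _) hint (fun t => ?_)
      rcases eq_or_ne (w t) 0 with h | h
      · simp [h]
      · exact mul_le_mul_of_nonneg_left (hmin (hsupp t h)) (hw0 t)
    rwa [integral_mul_const, hwint, one_mul] at this
  have hmem : (∫ t, w t * φ t) ∈ Set.uIcc (φ p) (φ q) := by
    rw [Set.uIcc_of_le (hmin hq)]
    exact ⟨hle2, hle1⟩
  obtain ⟨r, hr, hrv⟩ := intermediate_value_uIcc (hφ.continuousOn (s := Set.uIcc p q)) hmem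
  exact ⟨r, Set.uIcc_subset_Icc hp hq hr, hrv.symm⟩

/-- Fubini: the coefficient against an averaged exponential is the average of `Gc`. -/
lemma coef_avg (f : Lp ℂ 2 muPi) (w : ℝ → ℝ) (hw0 : ∀ t, 0 ≤ w t) (hwm : Measurable w)
    (hwI : Integrable w) :
    coefWith (fun s => ((Real.sqrt (2 * Real.pi))⁻¹ : ℂ) *
      ∫ r : ℝ, (w r : ℂ) * Complex.exp (Complex.I * (r : ℂ) * (s : ℂ))) f
    = ((Real.sqrt (2 * Real.pi))⁻¹ : ℂ) * ∫ r, (w r : ℂ) * Gc f r := by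
  set c : ℂ := ((Real.sqrt (2 * Real.pi))⁻¹ : ℂ) with hc
  have hwIC : Integrable (fun r => (w r : ℂ)) := hwI.ofReal
  have conj_step : ∀ s : ℝ,
      (starRingEnd ℂ) (c * ∫ r : ℝ, (w r : ℂ) * Complex.exp (Complex.I * r * s))
      = c * ∫ r : ℝ, (w r : ℂ) * Complex.exp (-(Complex.I * r * s)) := by
    intro s
    rw [map_mul]
    have hcc : (starRingEnd ℂ) c = c := by
      rw [hc]; simp
    rw [hcc, ← integral_conj]
    congr 1
    refine integral_congr_ae (Filter.Eventually.of_forall fun r => ?_)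
    show (starRingEnd ℂ) ((w r : ℂ) * Complex.exp (Complex.I * r * s)) = _
    rw [map_mul, ← Complex.exp_conj]
    congr 1
    · simp
    · congr 1
      simp only [map_mul, Complex.conj_I, Complex.conj_ofReal]
      ring
  have hprod : Integrable (Function.uncurry fun (s r : ℝ) =>
      (f : ℝ → ℂ) s * ((w r : ℂ) * Complex.exp (-(Complex.I * r * s)))) (muPi.prod volume) := by
    have hdom : Integrable (fun z : ℝ × ℝ => ‖(f : ℝ → ℂ) z.1‖ * w z.2) (muPi.prod volume) :=
      Integrable.mul_prod (f_int f).norm hwI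
    refine Integrable.mono' hdom ?_ ?_
    · refine StronglyMeasurable.aestronglyMeasurable ?_
      have h1 : StronglyMeasurable (fun z : ℝ × ℝ => (f : ℝ → ℂ) z.1) :=
        (Lp.stronglyMeasurable f).comp_measurable measurable_fst
      have h2 : StronglyMeasurable (fun z : ℝ × ℝ => (w z.2 : ℂ)) :=
        (Complex.measurable_ofReal.comp (hwm.comp measurable_snd)).stronglyMeasurable
      have h3 : StronglyMeasurable (fun z : ℝ × ℝ => Complex.exp (-(Complex.I * z.2 * z.1))) :=
        (Complex.continuous_exp.comp (by continuity)).stronglyMeasurable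
      exact h1.mul (h2.mul h3)
    · refine Filter.Eventually.of_forall fun z => ?_
      show ‖(f : ℝ → ℂ) z.1 * ((w z.2 : ℂ) * Complex.exp (-(Complex.I * z.2 * z.1)))‖ ≤ _
      have he : ‖(f : ℝ → ℂ) z.1 * ((w z.2 : ℂ) * Complex.exp (-(Complex.I * z.2 * z.1)))‖
          = ‖(f : ℝ → ℂ) z.1‖ * w z.2 := by
        rw [norm_mul, norm_mul, Complex.norm_exp]
        have h0 : (-(Complex.I * z.2 * z.1)).re = 0 := by simp
        rw [h0, Real.exp_zero, mul_one, Complex.norm_real, Real.norm_eq_abs]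
        rw [_root_.abs_of_nonneg (hw0 z.2)]
      rw [he]
  unfold coefWith
  calc (∫ s, (f : ℝ → ℂ) s * (starRingEnd ℂ) ((fun s : ℝ =>
        c * ∫ r : ℝ, (w r : ℂ) * Complex.exp (Complex.I * r * s)) s) ∂muPi)
      = ∫ s, c * ((f : ℝ → ℂ) s * ∫ r : ℝ, (w r : ℂ) * Complex.exp (-(Complex.I * r * s))) ∂muPi := by
        refine integral_congr_ae (Filter.Eventually.of_forall fun s => ?_)
        show (f : ℝ → ℂ) s * (starRingEnd ℂ)
          (c * ∫ r : ℝ, (w r : ℂ) * Complex.exp (Complex.I * r * s)) = _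
        rw [conj_step s]; ring
    _ = c * ∫ s, ((f : ℝ → ℂ) s * ∫ r : ℝ, (w r : ℂ) * Complex.exp (-(Complex.I * r * s))) ∂muPi := by
        rw [integral_const_mul]
    _ = c * ∫ s, (∫ r : ℝ, (f : ℝ → ℂ) s * ((w r : ℂ) * Complex.exp (-(Complex.I * r * s)))) ∂muPi := by
        congr 1
        refine integral_congr_ae (Filter.Eventually.of_forall fun s => ?_)
        simp only [← integral_const_mul]
    _ = c * ∫ r : ℝ, (∫ s, (f : ℝ → ℂ) s * ((w r : ℂ) * Complex.exp (-(Complex.I * r * s))) ∂muPi) := by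
        rw [integral_integral_swap hprod]
    _ = c * ∫ r, (w r : ℂ) * Gc f r := by
        congr 1
        refine integral_congr_ae (Filter.Eventually.of_forall fun r => ?_)
        unfold Gc
        simp only [← integral_const_mul]
        refine integral_congr_ae (Filter.Eventually.of_forall fun s => ?_)
        ring

/-- Theorem 6.10, average sampling frames. Let `δ > 0`, `(x j)_{j ∈ ℤ}`
reals, and for each `x ∈ ℝ` let `u x : ℝ → [0, ∞)` be measurable with `∫ u x = 1` and
supported in `[x - δ, x + δ]`. If there are `0 < A ≤ B` such that for EVERY sequence
`(t j)` with `t j ∈ [x j - δ, x j + δ]` the exponentials `s ↦ e^{i t_j s}` form a frame of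
`L²([-π, π])` with bounds `A, B`, then the averaged exponentials
`Ψ (x j) : s ↦ (2π)^{-1/2} ∫ u (x j) r · e^{i r s} dr` form a frame of `L²([-π, π])`. -/
theorem statement16 (δ : ℝ) (hδ : 0 < δ) (x : ℤ → ℝ) (u : ℝ → ℝ → ℝ)
    (hu0 : ∀ a t : ℝ, 0 ≤ u a t) (humeas : ∀ a : ℝ, Measurable (u a))
    (huint : ∀ a : ℝ, (∫ t, u a t) = 1)
    (husupp : ∀ a t : ℝ, u a t ≠ 0 → t ∈ Set.Icc (a - δ) (a + δ))
    (A B : ℝ) (hA : 0 < A) (hAB : A ≤ B)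
    (hframe : ∀ t : ℤ → ℝ, (∀ j, t j ∈ Set.Icc (x j - δ) (x j + δ)) →
      IsFrameCoef (fun j s => Complex.exp (Complex.I * (t j : ℂ) * (s : ℂ))) A B) :
    ∃ A' B' : ℝ, 0 < A' ∧ A' ≤ B' ∧
      IsFrameCoef (fun j s => ((Real.sqrt (2 * Real.pi))⁻¹ : ℂ) *
        ∫ r : ℝ, (u (x j) r : ℂ) * Complex.exp (Complex.I * (r : ℂ) * (s : ℂ))) A' B' := by
  set κ : ℝ := (Real.sqrt (2 * Real.pi))⁻¹ with hκ
  have hsq : Real.sqrt (2 * Real.pi) > 0 :=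
    Real.sqrt_pos.mpr (by positivity)
  have hκpos : 0 < κ := by positivity
  refine ⟨κ * A, κ * B, by positivity, by nlinarith, ?_⟩
  intro f
  -- integrability of the weights
  have hwI : ∀ j : ℤ, Integrable (u (x j)) := by
    intro j
    by_contra hc
    have h1 := huint (x j)
    rw [integral_undef hc] at h1
    norm_num at h1
  -- selections for the real and imaginary parts
  have hsel_re : ∀ j : ℤ, ∃ r ∈ Set.Icc (x j - δ) (x j + δ),
      (∫ t, u (x j) t * (Gc f t).re) = (Gc f r).re := by
    intro j
    exact mvt_avg (u (x j)) (hu0 (x j)) (humeas (x j)) (huint (x j)) _ _ (by linarith)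
      (husupp (x j)) _ (Complex.continuous_re.comp (Gc_continuous f))
  have hsel_im : ∀ j : ℤ, ∃ r ∈ Set.Icc (x j - δ) (x j + δ),
      (∫ t, u (x j) t * (Gc f t).im) = (Gc f r).im := by
    intro j
    exact mvt_avg (u (x j)) (hu0 (x j)) (humeas (x j)) (huint (x j)) _ _ (by linarith)
      (husupp (x j)) _ (Complex.continuous_im.comp (Gc_continuous f))
  choose rr hrmem hrval using hsel_re
  choose ss hsmem hsval using hsel_im
  -- frame bounds applied to the real and imaginary parts of f
  obtain ⟨Sg, hSg, hSgl, hSgu⟩ := hframe rr hrmem (gp f)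
  obtain ⟨Sh, hSh, hShl, hShu⟩ := hframe ss hsmem (hp f)
  -- integrability of u * Gc f
  have hGcI : ∀ j : ℤ, Integrable (fun r => (u (x j) r : ℂ) * Gc f r) := by
    intro j
    set C0 : ℝ := ∫ s, ‖(f : ℝ → ℂ) s‖ ∂muPi with hC0
    refine Integrable.mono' ((hwI j).const_mul C0) ?_ ?_
    · exact ((Complex.measurable_ofReal.comp (humeas (x j))).stronglyMeasurable.mul
        (Gc_continuous f).stronglyMeasurable).aestronglyMeasurable
    · refine Filter.Eventually.of_forall fun r => ?_
      rw [norm_mul, Complex.norm_real, Real.norm_eq_abs, _root_.abs_of_nonneg (hu0 (x j) r)]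
      exact mul_le_mul_of_nonneg_left (Gc_norm_le f r) (hu0 (x j) r) |>.trans
        (le_of_eq (mul_comm _ _))
  -- the key identity for each coefficient
  have hterm : ∀ j : ℤ,
      ‖coefWith (fun s => ((Real.sqrt (2 * Real.pi))⁻¹ : ℂ) *
        ∫ r : ℝ, (u (x j) r : ℂ) * Complex.exp (Complex.I * (r : ℂ) * (s : ℂ))) f‖ ^ 2
      = κ^2 * (‖coefWith (fun s => Complex.exp (Complex.I * (rr j : ℂ) * (s : ℂ))) (gp f)‖ ^ 2
        + ‖coefWith (fun s => Complex.exp (Complex.I * (ss j : ℂ) * (s : ℂ))) (hp f)‖ ^ 2) := by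
    intro j
    rw [coef_avg f (u (x j)) (hu0 (x j)) (humeas (x j)) (hwI j)]
    rw [coefWith_exp, coefWith_exp, Gc_gp, Gc_hp]
    set T : ℂ := ∫ r, (u (x j) r : ℂ) * Gc f r with hT
    have hre : T.re = (Gc f (rr j)).re := by
      rw [hT, ← hrval j]
      rw [← RCLike.re_eq_complex_re, ← integral_re (hGcI j), RCLike.re_eq_complex_re]
      refine integral_congr_ae (Filter.Eventually.of_forall fun r => ?_)
      show ((u (x j) r : ℂ) * Gc f r).re = u (x j) r * (Gc f r).re
      simp [Complex.mul_re]
    have him : T.im = (Gc f (ss j)).im := by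
      rw [hT, ← hsval j]
      rw [← RCLike.im_eq_complex_im, ← integral_im (hGcI j), RCLike.im_eq_complex_im]
      refine integral_congr_ae (Filter.Eventually.of_forall fun r => ?_)
      show ((u (x j) r : ℂ) * Gc f r).im = u (x j) r * (Gc f r).im
      simp [Complex.mul_im]
    have hnormT : ‖T‖^2 = (Gc f (rr j)).re^2 + (Gc f (ss j)).im^2 := by
      rw [Complex.sq_norm, Complex.normSq_apply, hre, him]
      ring
    rw [norm_mul, mul_pow, hnormT]
    have hc1 : ‖((Real.sqrt (2 * Real.pi))⁻¹ : ℂ)‖ = κ := by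
      rw [hκ]
      rw [norm_inv, Complex.norm_real, Real.norm_eq_abs, abs_of_pos hsq]
    rw [hc1]
    congr 1
    have e1 : ‖(((Gc f (rr j)).re : ℝ) : ℂ)‖^2 = (Gc f (rr j)).re^2 := by
      rw [Complex.norm_real, Real.norm_eq_abs, sq_abs]
    have e2 : ‖(((Gc f (ss j)).im : ℝ) : ℂ)‖^2 = (Gc f (ss j)).im^2 := by
      rw [Complex.norm_real, Real.norm_eq_abs, sq_abs]
    rw [e1, e2]
  -- assemble
  have hSg0 : 0 ≤ Sg := hSg.nonneg fun j => sq_nonneg _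
  have hSh0 : 0 ≤ Sh := hSh.nonneg fun j => sq_nonneg _
  have hsqrt_eq : Real.sqrt (κ^2 * (Sg + Sh)) = κ * Real.sqrt (Sg + Sh) := by
    rw [Real.sqrt_mul (sq_nonneg κ), Real.sqrt_sq hκpos.le]
  refine ⟨κ^2 * (Sg + Sh), ?_, ?_, ?_⟩
  · have h := (hSg.add hSh).mul_left (κ^2)
    have heq : (fun j : ℤ => κ^2 *
        (‖coefWith ((fun (j : ℤ) (s : ℝ) => Complex.exp (Complex.I * (rr j : ℂ) * (s : ℂ))) j) (gp f)‖ ^ 2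
        + ‖coefWith ((fun (j : ℤ) (s : ℝ) => Complex.exp (Complex.I * (ss j : ℂ) * (s : ℂ))) j) (hp f)‖ ^ 2))
        = (fun j : ℤ => ‖coefWith ((fun (j : ℤ) (s : ℝ) => ((Real.sqrt (2 * Real.pi))⁻¹ : ℂ) *
          ∫ r : ℝ, (u (x j) r : ℂ) * Complex.exp (Complex.I * (r : ℂ) * (s : ℂ))) j) f‖ ^ 2) :=
      funext fun j => (hterm j).symm
    exact heq ▸ h
  · -- lower bound
    have h1 : (A * ‖gp f‖)^2 ≤ Sg := by
      have h2 := pow_le_pow_left₀ (by positivity) hSgl 2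
      rwa [Real.sq_sqrt hSg0] at h2
    have h2 : (A * ‖hp f‖)^2 ≤ Sh := by
      have h3 := pow_le_pow_left₀ (by positivity) hShl 2
      rwa [Real.sq_sqrt hSh0] at h3
    have h3 : (A * ‖f‖)^2 ≤ Sg + Sh := by
      have hns := norm_split f
      have e : (A * ‖f‖)^2 = (A * ‖gp f‖)^2 + (A * ‖hp f‖)^2 := by
        rw [mul_pow, mul_pow, mul_pow, ← hns]; ring
      linarith
    have h4 : A * ‖f‖ ≤ Real.sqrt (Sg + Sh) := by
      have h5 := Real.sqrt_le_sqrt h3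
      rwa [Real.sqrt_sq (by positivity)] at h5
    rw [hsqrt_eq]
    calc κ * A * ‖f‖ = κ * (A * ‖f‖) := by ring
      _ ≤ κ * Real.sqrt (Sg + Sh) := by
          exact mul_le_mul_of_nonneg_left h4 hκpos.le
  · -- upper bound
    have hB : 0 ≤ B := hA.le.trans hAB
    have h1 : Sg ≤ (B * ‖gp f‖)^2 := by
      have h2 := pow_le_pow_left₀ (Real.sqrt_nonneg Sg) hSgu 2
      rwa [Real.sq_sqrt hSg0] at h2
    have h2 : Sh ≤ (B * ‖hp f‖)^2 := by
      have h3 := pow_le_pow_left₀ (Real.sqrt_nonneg Sh) hShu 2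
      rwa [Real.sq_sqrt hSh0] at h3
    have h3 : Sg + Sh ≤ (B * ‖f‖)^2 := by
      have hns := norm_split f
      have e : (B * ‖f‖)^2 = (B * ‖gp f‖)^2 + (B * ‖hp f‖)^2 := by
        rw [mul_pow, mul_pow, mul_pow, ← hns]; ring
      linarith
    have h4 : Real.sqrt (Sg + Sh) ≤ B * ‖f‖ := by
      have h5 := Real.sqrt_le_sqrt h3
      rwa [Real.sqrt_sq (by positivity)] at h5
    rw [hsqrt_eq]
    calc κ * Real.sqrt (Sg + Sh) ≤ κ * (B * ‖f‖) :=
          mul_le_mul_of_nonneg_left h4 hκpos.le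
      _ = κ * B * ‖f‖ := by ring
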